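/- arXiv:1710.00458 — 2 statements merged into one kernel-verified Lean document; each statement's English description precedes it below -/
import Mathlib

section
/- Let n, a, r be natural numbers with r > 0 and a + r ≤ n, let T : Fin n → α be a table, and let the selected rows be those with indices in the segment {a, a+1, …, a+r−1}. Define the output table R : Fin r → α by setting R(j) = T(i) for the unique index i in the segment with i mod r = j. Then the multiset of values of R equals the multiset of selected rows {T(a), T(a+1), …, T(a+r−1)}; equivalently, there is a permutation σ of Fin r such that R(j) = T(a + σ(j)) for every j. -/
/-- Continuous SELECT correctness: if `R : Fin r → α` is defined by writing the
row `T i` (for `i` in the segment `{a, …, a+r−1}`) to output position `i % r`,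
then `R` is a permutation of the selected rows: there is a permutation `σ` of
`Fin r` with `R j = T (a + σ j)` for every `j`. -/
theorem continuous_select_correct {α : Type*} (n a r : ℕ) (hr : 0 < r)
    (hn : a + r ≤ n) (T : Fin n → α) (R : Fin r → α)
    (hR : ∀ (i : ℕ) (_hi₁ : a ≤ i) (_hi₂ : i < a + r),
      R ⟨i % r, Nat.mod_lt i hr⟩ = T ⟨i, by omega⟩) :
    ∃ σ : Equiv.Perm (Fin r), ∀ j : Fin r,
      R j = T ⟨a + σ j, by have := (σ j).isLt; omega⟩ := by
  haveI : NeZero r := ⟨hr.ne'⟩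
  set c : Fin r := ⟨(r - a % r) % r, Nat.mod_lt _ hr⟩ with hc
  refine ⟨Equiv.addLeft c, fun j => ?_⟩
  set x : ℕ := ((Equiv.addLeft c) j : ℕ) with hx
  have hxv : x = ((r - a % r) % r + (j : ℕ)) % r := by
    simp [hx, hc, Fin.add_def]
  have hxlt : x < r := hxv ▸ Nat.mod_lt _ hr
  have ha : a % r < r := Nat.mod_lt a hr
  have hmod : (a + x) % r = (j : ℕ) := by
    have h1 : a + x ≡ a + ((r - a % r) + (j : ℕ)) [MOD r] := by
      exact Nat.ModEq.add_left a (hxv ▸ (Nat.mod_mod_of_dvd _ dvd_rfl).trans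
        (Nat.ModEq.add_right _ (Nat.mod_modEq _ _)))
    have hle : a % r ≤ a := Nat.mod_le a r
    have hsum : a % r + (r - a % r) = r := Nat.add_sub_cancel' ha.le
    have h2 : a + ((r - a % r) + (j : ℕ)) = (a - a % r) + r + (j : ℕ) := by omega
    have h3 : (a - a % r) % r = 0 := by
      have hmd := Nat.mod_add_div a r
      have : a - a % r = r * (a / r) := by omega
      simp [this]
    calc (a + x) % r = ((a - a % r) + r + (j : ℕ)) % r := by rw [h1]; rw [h2]
      _ = (j : ℕ) % r := by simp [Nat.add_mod, h3]
      _ = (j : ℕ) := Nat.mod_eq_of_lt j.isLt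
  have := hR (a + x) (by omega) (by omega)
  have hj : (⟨(a + x) % r, Nat.mod_lt _ hr⟩ : Fin r) = j := by
    ext; simp [hmod]
  rw [hj] at this
  exact this
end

section
/- Let T₁ : Fin n → α and T₂ : Fin m → β be tables with join-key functions k₁ : α → K and k₂ : β → K, and suppose the composite k₂ ∘ T₂ is injective (i.e., the join column of T₂ is a primary key, so the join is a foreign-key join). Then the cardinality of the set of matching index pairs {(i, j) : k₁(T₁ i) = k₂(T₂ j)} is at most n; in particular it is at most max(n, m). -/
/-- Foreign-key join output bound: if the join column of `T₂` is a key
(`k₂ ∘ T₂` injective), then the number of matching index pairs is at most `n`;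
in particular it is at most `max n m`. -/
theorem foreign_key_join_bound {α β K : Type*} [DecidableEq K] (n m : ℕ)
    (T₁ : Fin n → α) (T₂ : Fin m → β) (k₁ : α → K) (k₂ : β → K)
    (hinj : Function.Injective (k₂ ∘ T₂)) :
    (Finset.univ.filter
        (fun p : Fin n × Fin m => k₁ (T₁ p.1) = k₂ (T₂ p.2))).card ≤ n ∧
    (Finset.univ.filter
        (fun p : Fin n × Fin m => k₁ (T₁ p.1) = k₂ (T₂ p.2))).card ≤ max n m := by
  have h : (Finset.univ.filter
      (fun p : Fin n × Fin m => k₁ (T₁ p.1) = k₂ (T₂ p.2))).card ≤ n := by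
    have := Finset.card_le_card_of_injOn (f := Prod.fst)
      (s := Finset.univ.filter
        (fun p : Fin n × Fin m => k₁ (T₁ p.1) = k₂ (T₂ p.2)))
      (t := (Finset.univ : Finset (Fin n)))
      (fun p _ => Finset.mem_univ _)
      (by
        intro p hp q hq hfst
        simp only [Finset.mem_coe, Finset.mem_filter] at hp hq
        have h2 : k₂ (T₂ p.2) = k₂ (T₂ q.2) := by
          rw [← hp.2, ← hq.2, hfst]
        have := hinj h2
        exact Prod.ext hfst this)
    simpa using this
  exact ⟨h, h.trans (le_max_left _ _)⟩
end
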